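/- arXiv:1308.2116 — 3 statements merged into one kernel-verified Lean document; each statement's English description precedes it below -/
import Mathlib

section
/- Let m be a positive integer, K a symmetric positive semidefinite real m×m matrix, Y ∈ ℝᵐ, and λ > 0 a real number. Then the matrix K + λI is invertible, and the vector A* = (K + λI)⁻¹ Y is a global minimizer of the regularized least-squares objective J, i.e. J(A*) ≤ J(A) for every A ∈ ℝᵐ. -/
open Matrix

/-- For a symmetric positive semidefinite real `m × m` matrix `K`,
`Y ∈ ℝᵐ` and `λ > 0`, the matrix `K + λ I` is invertible and
`A* = (K + λ I)⁻¹ Y` is a global minimizer of the regularized least-squares objective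
`J(A) = (Y − K A)ᵀ(Y − K A) + λ Aᵀ(K A)`. -/
theorem weight_matrix_global_minimizer
    (m : ℕ) (hm : 0 < m)
    (K : Matrix (Fin m) (Fin m) ℝ) (hK : K.PosSemidef)
    (Y : Fin m → ℝ) (l : ℝ) (hl : 0 < l)
    (J : (Fin m → ℝ) → ℝ)
    (hJ : ∀ A : Fin m → ℝ,
      J A = (Y - K.mulVec A) ⬝ᵥ (Y - K.mulVec A) + l * (A ⬝ᵥ K.mulVec A)) :
    IsUnit (K + l • (1 : Matrix (Fin m) (Fin m) ℝ)) ∧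
    ∀ A : Fin m → ℝ,
      J ((K + l • (1 : Matrix (Fin m) (Fin m) ℝ))⁻¹.mulVec Y) ≤ J A := by
  set M : Matrix (Fin m) (Fin m) ℝ := K + l • (1 : Matrix (Fin m) (Fin m) ℝ) with hMdef
  have hone : (l • (1 : Matrix (Fin m) (Fin m) ℝ)).PosDef := by
    refine Matrix.PosDef.of_dotProduct_mulVec_pos ?_ (fun x hx => ?_)
    · simp [Matrix.IsHermitian, Matrix.conjTranspose]
      ext i j
      by_cases h : i = j <;> simp [Matrix.one_apply, h, eq_comm]
    · have hxx : (0:ℝ) < star x ⬝ᵥ x := by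
        have := Matrix.dotProduct_star_self_pos_iff (v := x) |>.mpr hx
        simpa [dotProduct_comm] using this
      simpa [Matrix.smul_mulVec, Matrix.one_mulVec, dotProduct_smul] using
        mul_pos hl hxx
  have hM : M.PosDef := Matrix.PosDef.posSemidef_add hK hone
  have hMunit : IsUnit M := hM.isUnit
  refine ⟨hMunit, fun A => ?_⟩
  set As : Fin m → ℝ := M⁻¹.mulVec Y with hAs
  have hMAs : M.mulVec As = Y := by
    rw [hAs, Matrix.mulVec_mulVec, Matrix.mul_nonsing_inv _ ((Matrix.isUnit_iff_isUnit_det M).mp hMunit), Matrix.one_mulVec]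
  -- Q = K * M is symmetric PSD
  set Q : Matrix (Fin m) (Fin m) ℝ := K * M with hQdef
  have hKsymm : Kᵀ = K := hK.isHermitian
  have hQ : Q.PosSemidef := by
    have h1 : (K * K).PosSemidef := by
      have := Matrix.posSemidef_conjTranspose_mul_self K
      simpa [hK.isHermitian.eq, hKsymm, Matrix.star_eq_conjTranspose] using this
    have h2 : (l • K).PosSemidef := by
      refine Matrix.PosSemidef.of_dotProduct_mulVec_nonneg ?_ (fun x => ?_)
      · show (l • K)ᴴ = l • K
        rw [Matrix.conjTranspose_smul]
        simp only [star_trivial]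
        rw [show Kᴴ = K from hK.isHermitian.eq]
      · have := hK.dotProduct_mulVec_nonneg x
        simpa [Matrix.smul_mulVec, dotProduct_smul] using
          mul_nonneg hl.le this
    have : (K * K + l • K).PosSemidef := h1.add h2
    simpa [hQdef, hMdef, Matrix.mul_add, Matrix.mul_smul, Matrix.mul_one] using this
  have hQsymm : Qᵀ = Q := by
    have : Qᵀ = Mᵀ * Kᵀ := by rw [hQdef, Matrix.transpose_mul]
    have hMt : Mᵀ = M := hM.isHermitian
    rw [this, hMt, hKsymm]
    simp [hQdef, hMdef, Matrix.add_mul, Matrix.mul_add, Matrix.smul_mul, Matrix.mul_smul]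
  -- key transpose-dot lemma
  have hdot : ∀ (N : Matrix (Fin m) (Fin m) ℝ) (x y : Fin m → ℝ),
      N.mulVec x ⬝ᵥ y = x ⬝ᵥ Nᵀ.mulVec y := by
    intro N x y
    rw [dotProduct_comm, Matrix.dotProduct_mulVec, dotProduct_comm, Matrix.mulVec_transpose]
  -- expansion of J
  have hexp : ∀ A : Fin m → ℝ,
      J A = Y ⬝ᵥ Y - 2 * ((K.mulVec Y) ⬝ᵥ A) + A ⬝ᵥ Q.mulVec A := by
    intro A
    rw [hJ A]
    have h1 : (Y - K.mulVec A) ⬝ᵥ (Y - K.mulVec A)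
        = Y ⬝ᵥ Y - 2 * ((K.mulVec Y) ⬝ᵥ A) + (K.mulVec A) ⬝ᵥ (K.mulVec A) := by
      rw [dotProduct_sub, sub_dotProduct, sub_dotProduct]
      have h2 : Y ⬝ᵥ K.mulVec A = K.mulVec Y ⬝ᵥ A := by
        rw [hdot K Y A, hKsymm]
      have h3 : K.mulVec A ⬝ᵥ Y = K.mulVec Y ⬝ᵥ A := by
        rw [dotProduct_comm, h2]
      rw [h2, h3]; ring
    have h4 : (K.mulVec A) ⬝ᵥ (K.mulVec A) + l * (A ⬝ᵥ K.mulVec A) = A ⬝ᵥ Q.mulVec A := by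
      have h5 : (K.mulVec A) ⬝ᵥ (K.mulVec A) = A ⬝ᵥ (K*K).mulVec A := by
        rw [hdot K (A) (K.mulVec A), hKsymm, Matrix.mulVec_mulVec]
      rw [h5, hQdef, hMdef, Matrix.mul_add, Matrix.mul_smul, Matrix.mul_one,
        Matrix.add_mulVec, dotProduct_add, Matrix.smul_mulVec,
        dotProduct_smul]
      simp [smul_eq_mul]
    rw [h1, ← h4]; ring
  -- the difference is d ⬝ Q d
  have hQAs : Q.mulVec As = K.mulVec Y := by
    rw [hQdef, ← Matrix.mulVec_mulVec, hMAs]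
  have hKey : J A - J As = (A - As) ⬝ᵥ Q.mulVec (A - As) := by
    rw [hexp A, hexp As]
    rw [Matrix.mulVec_sub, dotProduct_sub, sub_dotProduct, sub_dotProduct]
    have e1 : A ⬝ᵥ Q.mulVec As = K.mulVec Y ⬝ᵥ A := by
      rw [hQAs, dotProduct_comm]
    have e2 : As ⬝ᵥ Q.mulVec A = K.mulVec Y ⬝ᵥ A := by
      rw [← hQsymm, ← hdot Q As A, hQAs]
    have e3 : As ⬝ᵥ Q.mulVec As = K.mulVec Y ⬝ᵥ As := by
      rw [hQAs, dotProduct_comm]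
    rw [e1, e2, e3]; ring
  have := hQ.dotProduct_mulVec_nonneg (A - As)
  simp only [star_trivial] at this
  have hfin : 0 ≤ (A - As) ⬝ᵥ Q.mulVec (A - As) := by
    simpa using hQ.dotProduct_mulVec_nonneg (A - As)
  linarith [hKey, hfin]
end

section
/- Let m be a positive integer, K a symmetric real m×m matrix, Y ∈ ℝᵐ, and λ > 0 a real number such that K + λI is invertible. Setting A* = (K + λI)⁻¹ Y, the regularized least-squares objective satisfies the exact decomposition J(A) = (A − A*)ᵀ K(K + λI)(A − A*) + J(A*) for every A ∈ ℝᵐ. -/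
open Matrix

/-- For a symmetric real `m × m` matrix `K`, `Y ∈ ℝᵐ` and `λ > 0` with
`K + λ I` invertible, setting `A* = (K + λ I)⁻¹ Y`, the regularized least-squares
objective satisfies `J(A) = (A − A*)ᵀ K (K + λ I) (A − A*) + J(A*)` for all `A`. -/
theorem objective_exact_decomposition
    (m : ℕ) (hm : 0 < m)
    (K : Matrix (Fin m) (Fin m) ℝ) (hK : K.IsSymm)
    (Y : Fin m → ℝ) (l : ℝ) (hl : 0 < l)
    (hinv : IsUnit (K + l • (1 : Matrix (Fin m) (Fin m) ℝ)))
    (J : (Fin m → ℝ) → ℝ)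
    (hJ : ∀ A : Fin m → ℝ,
      J A = (Y - K.mulVec A) ⬝ᵥ (Y - K.mulVec A) + l * (A ⬝ᵥ K.mulVec A)) :
    ∀ A : Fin m → ℝ,
      J A = (A - (K + l • (1 : Matrix (Fin m) (Fin m) ℝ))⁻¹.mulVec Y) ⬝ᵥ
              (K * (K + l • (1 : Matrix (Fin m) (Fin m) ℝ))).mulVec
                (A - (K + l • (1 : Matrix (Fin m) (Fin m) ℝ))⁻¹.mulVec Y)
            + J ((K + l • (1 : Matrix (Fin m) (Fin m) ℝ))⁻¹.mulVec Y) := by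
  intro A
  set M : Matrix (Fin m) (Fin m) ℝ := K + l • (1 : Matrix (Fin m) (Fin m) ℝ) with hM
  set As : Fin m → ℝ := M⁻¹.mulVec Y with hAs
  have hdet : IsUnit M.det := (Matrix.isUnit_iff_isUnit_det M).mp hinv
  have hY : M.mulVec As = Y := by
    rw [hAs, Matrix.mulVec_mulVec, Matrix.mul_nonsing_inv M hdet, Matrix.one_mulVec]
  have hYe : Y = K.mulVec As + l • As := by
    rw [← hY, hM, Matrix.add_mulVec, Matrix.smul_mulVec, Matrix.one_mulVec]
  have dotK : ∀ x y : Fin m → ℝ, x ⬝ᵥ K.mulVec y = y ⬝ᵥ K.mulVec x := by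
    intro x y
    rw [Matrix.dotProduct_mulVec, ← Matrix.mulVec_transpose, hK.eq, dotProduct_comm]
  have dotK2 : ∀ x y : Fin m → ℝ,
      x ⬝ᵥ K.mulVec (K.mulVec y) = y ⬝ᵥ K.mulVec (K.mulVec x) := by
    intro x y
    rw [dotK x (K.mulVec y), dotK y (K.mulVec x), dotProduct_comm]
  rw [hJ A, hJ As, hYe]
  rw [show (K * M).mulVec (A - As) = K.mulVec (K.mulVec (A - As)) + l • K.mulVec (A - As) by
    rw [← Matrix.mulVec_mulVec, hM, Matrix.add_mulVec, Matrix.smul_mulVec,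
      Matrix.one_mulVec, Matrix.mulVec_add, Matrix.mulVec_smul]]
  simp only [Matrix.mulVec_sub, Matrix.mulVec_add, Matrix.mulVec_smul,
    dotProduct_sub, sub_dotProduct, dotProduct_add, add_dotProduct,
    dotProduct_smul, smul_dotProduct, smul_eq_mul, smul_sub]
  have e1 : ∀ x y : Fin m → ℝ, K.mulVec x ⬝ᵥ K.mulVec y = x ⬝ᵥ K.mulVec (K.mulVec y) := by
    intro x y; rw [dotProduct_comm]; exact (dotK x _).symm
  have e2 : ∀ x y : Fin m → ℝ, K.mulVec x ⬝ᵥ y = y ⬝ᵥ K.mulVec x := fun x y =>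
    dotProduct_comm _ _
  simp only [e1, e2]
  rw [dotK2 As A, dotK As A]
  ring
end

section
/- Let n and m be positive integers, x₁, …, x_m ∈ ℝⁿ, and σ a nonzero real number. Then the Gaussian kernel matrix K ∈ ℝ^{m×m} with entries K_{ij} = exp(−‖x_i − x_j‖² / σ²) is symmetric and positive semidefinite, i.e. cᵀ K c ≥ 0 for every c ∈ ℝᵐ. -/
open Matrix

/-- For each `k`, `∑ i j, a i * a j * ⟪y i, y j⟫^k ≥ 0` since it is a sum of squares. -/
lemma inner_pow_sum_nonneg {m n : ℕ} (a : Fin m → ℝ) (y : Fin m → EuclideanSpace ℝ (Fin n))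
    (k : ℕ) :
    0 ≤ ∑ i, ∑ j, a i * a j * (inner ℝ (y i) (y j) : ℝ) ^ k := by
  have hinner : ∀ i j, (inner ℝ (y i) (y j) : ℝ) = ∑ p, y i p * y j p := by
    intro i j
    simp [PiLp.inner_apply, RCLike.inner_apply, mul_comm]
  calc (0:ℝ) ≤ ∑ q ∈ Fintype.piFinset (fun _ : Fin k => (Finset.univ : Finset (Fin n))),
        (∑ i, a i * ∏ t, y i (q t)) ^ 2 := by positivity
    _ = ∑ i, ∑ j, a i * a j * (inner ℝ (y i) (y j) : ℝ) ^ k := by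
        simp only [sq, Finset.sum_mul_sum, hinner, Finset.sum_pow']
        rw [Finset.sum_comm]
        refine Finset.sum_congr rfl fun i _ => ?_
        rw [Finset.sum_comm]
        refine Finset.sum_congr rfl fun j _ => ?_
        rw [Finset.mul_sum]
        refine Finset.sum_congr rfl fun q _ => ?_
        rw [Finset.prod_mul_distrib]
        ring

lemma exp_inner_sum_nonneg {m n : ℕ} (a : Fin m → ℝ) (y : Fin m → EuclideanSpace ℝ (Fin n)) :
    0 ≤ ∑ i, ∑ j, a i * a j * Real.exp (inner ℝ (y i) (y j) : ℝ) := by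
  have hexp : ∀ s : ℝ, Real.exp s = ∑' k : ℕ, s ^ k / (Nat.factorial k) := by
    intro s
    rw [Real.exp_eq_exp_ℝ, NormedSpace.exp_eq_tsum_div]
  have hsummable : ∀ i j : Fin m,
      Summable (fun k : ℕ => a i * a j * ((inner ℝ (y i) (y j) : ℝ) ^ k / (Nat.factorial k))) :=
    fun i j => (Real.summable_pow_div_factorial _).mul_left _
  calc (0:ℝ) ≤ ∑' k : ℕ, ∑ i, ∑ j,
        a i * a j * ((inner ℝ (y i) (y j) : ℝ) ^ k / (Nat.factorial k)) := by
        refine tsum_nonneg fun k => ?_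
        have h := inner_pow_sum_nonneg a y k
        have : ∑ i, ∑ j, a i * a j * ((inner ℝ (y i) (y j) : ℝ) ^ k / (Nat.factorial k))
            = (∑ i, ∑ j, a i * a j * (inner ℝ (y i) (y j) : ℝ) ^ k) / (Nat.factorial k) := by
          rw [Finset.sum_div]
          refine Finset.sum_congr rfl fun i _ => ?_
          rw [Finset.sum_div]
          exact Finset.sum_congr rfl fun j _ => by ring
        rw [this]
        positivity
    _ = ∑ i, ∑ j, a i * a j * Real.exp (inner ℝ (y i) (y j) : ℝ) := by
        rw [Summable.tsum_finsetSum (fun i _ => summable_sum fun j _ => hsummable i j)]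
        refine Finset.sum_congr rfl fun i _ => ?_
        rw [Summable.tsum_finsetSum (fun j _ => hsummable i j)]
        refine Finset.sum_congr rfl fun j _ => ?_
        rw [hexp, ← tsum_mul_left]

/-- For `x₁, …, x_m ∈ ℝⁿ` and `σ ≠ 0`, the Gaussian kernel matrix
`K_{ij} = exp(−‖x_i − x_j‖² / σ²)` is symmetric and positive semidefinite, i.e.
`cᵀ K c ≥ 0` for every `c ∈ ℝᵐ`. -/
theorem gaussian_kernel_matrix_posSemidef
    (n m : ℕ) (hn : 0 < n) (hm : 0 < m)
    (x : Fin m → EuclideanSpace ℝ (Fin n)) (σ : ℝ) (hσ : σ ≠ 0)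
    (K : Matrix (Fin m) (Fin m) ℝ)
    (hKdef : ∀ i j, K i j = Real.exp (-‖x i - x j‖ ^ 2 / σ ^ 2)) :
    K.IsSymm ∧ ∀ c : Fin m → ℝ, 0 ≤ c ⬝ᵥ K.mulVec c := by
  have hσ2 : (0:ℝ) < σ ^ 2 := by positivity
  constructor
  · ext i j
    rw [Matrix.transpose_apply, hKdef, hKdef, norm_sub_rev]
  · intro c
    -- rescale: y i = (√2 / σ) • x i
    set t : ℝ := Real.sqrt 2 / σ with ht
    set y : Fin m → EuclideanSpace ℝ (Fin n) := fun i => t • x i with hy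
    set a : Fin m → ℝ := fun i => c i * Real.exp (-‖x i‖ ^ 2 / σ ^ 2) with ha
    have key : ∀ i j, c i * c j * K i j = a i * a j * Real.exp (inner ℝ (y i) (y j) : ℝ) := by
      intro i j
      have hinner : (inner ℝ (y i) (y j) : ℝ) = (2 / σ ^ 2) * inner ℝ (x i) (x j) := by
        simp only [hy, inner_smul_left, inner_smul_right, RCLike.conj_to_real]
        have : t * t = 2 / σ ^ 2 := by
          rw [ht, div_mul_div_comm, Real.mul_self_sqrt (by norm_num), sq]
        rw [← mul_assoc, this]
      have hnorm : -‖x i - x j‖ ^ 2 / σ ^ 2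
          = -‖x i‖ ^ 2 / σ ^ 2 + -‖x j‖ ^ 2 / σ ^ 2 + (2 / σ ^ 2) * inner ℝ (x i) (x j) := by
        have := @norm_sub_sq_real (EuclideanSpace ℝ (Fin n)) _ _ (x i) (x j)
        rw [this]
        field_simp
        ring
      rw [hKdef, hnorm, Real.exp_add, Real.exp_add, ha, hinner]
      ring
    have : c ⬝ᵥ K.mulVec c = ∑ i, ∑ j, a i * a j * Real.exp (inner ℝ (y i) (y j) : ℝ) := by
      simp only [dotProduct, Matrix.mulVec, dotProduct, Finset.mul_sum]
      refine Finset.sum_congr rfl fun i _ => Finset.sum_congr rfl fun j _ => ?_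
      rw [← key]; ring
    rw [this]
    exact exp_inner_sum_nonneg a y
end
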